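/- Every finite family of axis-parallel segments (1-boxes) in ℝ^d, d ≥ 1, is 2-pierceable if and only if every subfamily of cardinality 5 is 2-pierceable; i.e., h(d,1,2) = 5 (for d ≥ 2). -/
import Mathlib


open Set

/-- An axis-parallel box in `ℝ^d`: a product of nonempty closed intervals. -/
def IsBoxIn (d : ℕ) (s : Set (Fin d → ℝ)) : Prop :=
  ∃ lo hi : Fin d → ℝ, (∀ i, lo i ≤ hi i) ∧
    s = {x | ∀ i, x i ∈ Set.Icc (lo i) (hi i)}

/-- A `p`-box in `ℝ^d`: a product of nonempty closed intervals, exactly `d - p`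
of which are degenerate (single points). -/
def IsPBoxIn (p d : ℕ) (s : Set (Fin d → ℝ)) : Prop :=
  ∃ lo hi : Fin d → ℝ, (∀ i, lo i ≤ hi i) ∧
    {i : Fin d | lo i = hi i}.ncard = d - p ∧
    s = {x | ∀ i, x i ∈ Set.Icc (lo i) (hi i)}

/-- A graph is an interval graph if it is the intersection graph of a family of
closed real intervals. -/
def IsIntervalGraph {V : Type*} (G : SimpleGraph V) : Prop :=
  ∃ a b : V → ℝ, (∀ v, a v ≤ b v) ∧
    ∀ u v : V, u ≠ v →
      (G.Adj u v ↔ (Set.Icc (a u) (b u) ∩ Set.Icc (a v) (b v)).Nonempty)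

/-- `G` is the intersection graph of a family of `p`-boxes in `ℝ^d`. -/
def RealizableAsPBoxes {V : Type*} (p d : ℕ) (G : SimpleGraph V) : Prop :=
  ∃ B : V → Set (Fin d → ℝ), (∀ v, IsPBoxIn p d (B v)) ∧
    ∀ u v : V, u ≠ v → (G.Adj u v ↔ (B u ∩ B v).Nonempty)

/-- `G` is the intersection graph of a family of (full) axis-parallel boxes in `ℝ^d`. -/
def RealizableAsBoxes {V : Type*} (d : ℕ) (G : SimpleGraph V) : Prop :=
  ∃ B : V → Set (Fin d → ℝ), (∀ v, IsBoxIn d (B v)) ∧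
    ∀ u v : V, u ≠ v → (G.Adj u v ↔ (B u ∩ B v).Nonempty)

/-- The intersection graph of a family of sets in `ℝ^d`. -/
def intersectionGraph {ι : Type*} {d : ℕ} (B : ι → Set (Fin d → ℝ)) : SimpleGraph ι :=
  SimpleGraph.fromRel fun i j => (B i ∩ B j).Nonempty

/-- The family `B` can be pierced by at most `n` points. -/
def Pierceable {ι : Type*} {d : ℕ} (B : ι → Set (Fin d → ℝ)) (n : ℕ) : Prop :=
  ∃ P : Finset (Fin d → ℝ), P.card ≤ n ∧ ∀ i, ∃ p ∈ P, p ∈ B i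

/-- The subfamily of `B` indexed by `S` can be pierced by at most `n` points. -/
def PierceableOn {ι : Type*} {d : ℕ} (B : ι → Set (Fin d → ℝ)) (S : Finset ι) (n : ℕ) : Prop :=
  ∃ P : Finset (Fin d → ℝ), P.card ≤ n ∧ ∀ i ∈ S, ∃ p ∈ P, p ∈ B i

/-- The cycle graph on `s` vertices, with vertex set `ZMod s`. -/
def cyc (s : ℕ) : SimpleGraph (ZMod s) := SimpleGraph.fromRel fun i j => j = i + 1

/-- The boxicity of a graph, as an extended natural number. -/
noncomputable def boxicity {V : Type*} (G : SimpleGraph V) : ℕ∞ :=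
  sInf {n : ℕ∞ | ∃ k : ℕ, n = k ∧ RealizableAsBoxes k G}

/-- The `p`-boxicity of a graph: the least `d ≥ p` such that `G` is realizable as
`p`-boxes in `ℝ^d` (possibly `∞`). -/
noncomputable def pboxicity {V : Type*} (p : ℕ) (G : SimpleGraph V) : ℕ∞ :=
  sInf {n : ℕ∞ | ∃ k : ℕ, n = k ∧ p ≤ k ∧ RealizableAsPBoxes p k G}

/-- An axis-parallel segment in `ℝ^d`: a product of closed intervals, all but at most
one of which are single points. -/
def IsSegmentIn (d : ℕ) (s : Set (Fin d → ℝ)) : Prop :=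
  ∃ lo hi : Fin d → ℝ, (∀ i, lo i ≤ hi i) ∧
    {i : Fin d | lo i ≠ hi i}.ncard ≤ 1 ∧
    s = {x | ∀ i, x i ∈ Set.Icc (lo i) (hi i)}


section HellyAux

private lemma mem_pair_of_card_le_two {α : Type*} [DecidableEq α] {P : Finset α} (h : P.card ≤ 2)
    {p q : α} (hp : p ∈ P) (hq : q ∈ P) (hne : p ≠ q) : ∀ r ∈ P, r = p ∨ r = q := by
  have hsub : ({p, q} : Finset α) ⊆ P := by
    intro r hr
    rcases Finset.mem_insert.1 hr with h' | h'
    · exact h' ▸ hp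
    · exact (Finset.mem_singleton.1 h') ▸ hq
  have hcard : ({p, q} : Finset α).card = 2 := Finset.card_pair hne
  have heq := Finset.eq_of_subset_of_card_le hsub (by omega)
  intro r hr
  rw [← heq] at hr
  simpa using Finset.mem_insert.1 hr

lemma seg_struct {d : ℕ} (hd : 1 ≤ d) {s : Set (Fin d → ℝ)} (hs : IsSegmentIn d s) :
    s.Nonempty ∧ ∃ j : Fin d,
      (∀ x ∈ s, ∀ y ∈ s, ∀ i, i ≠ j → x i = y i) ∧
      (∀ x ∈ s, ∀ y ∈ s, ∀ r : ℝ, min (x j) (y j) ≤ r → r ≤ max (x j) (y j) →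
        Function.update x j r ∈ s) := by
  obtain ⟨lo, hi, hlh, hcard, rfl⟩ := hs
  have hmem : ∀ x : Fin d → ℝ, x ∈ {x : Fin d → ℝ | ∀ i, x i ∈ Set.Icc (lo i) (hi i)} ↔
      ∀ i, lo i ≤ x i ∧ x i ≤ hi i := by
    intro x; simp [Set.mem_Icc, Set.mem_setOf_eq]
  constructor
  · exact ⟨lo, by simp only [Set.mem_setOf_eq, Set.mem_Icc]; exact fun i => ⟨le_refl _, hlh i⟩⟩
  · obtain ⟨j, hj⟩ : ∃ j : Fin d, ∀ i, i ≠ j → lo i = hi i := by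
      rcases Set.eq_empty_or_nonempty {i : Fin d | lo i ≠ hi i} with he | ⟨j, hj⟩
      · refine ⟨⟨0, hd⟩, fun i _ => ?_⟩
        by_contra hne
        exact (Set.eq_empty_iff_forall_notMem.1 he i) hne
      · refine ⟨j, fun i hij => ?_⟩
        by_contra hne
        have h2 : ({i, j} : Set (Fin d)) ⊆ {i | lo i ≠ hi i} := by
          intro a ha
          rcases ha with rfl | ha
          · exact hne
          · simpa using ha ▸ hj
        have := Set.ncard_le_ncard h2 (Set.toFinite _)
        rw [Set.ncard_pair hij] at this
        omega
    have hfix : ∀ x ∈ {x : Fin d → ℝ | ∀ i, x i ∈ Set.Icc (lo i) (hi i)}, ∀ i, i ≠ j → x i = lo i := by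
      intro x hx i hij
      have h1 := (hmem x).1 hx i
      have := hj i hij
      linarith [h1.1, h1.2]
    refine ⟨j, fun x hx y hy i hij => by rw [hfix x hx i hij, hfix y hy i hij], ?_⟩
    intro x hx y hy r h1 h2
    rw [hmem] at hx hy ⊢
    intro i
    rcases eq_or_ne i j with rfl | hij
    · rw [Function.update_self]
      constructor
      · exact le_trans (le_min (hx i).1 (hy i).1) h1
      · exact le_trans h2 (max_le (hx i).2 (hy i).2)
    · rw [Function.update_of_ne hij]
      exact hx i

lemma seg_helly {d : ℕ} {ι : Type*} (S : Finset ι) (B : ι → Set (Fin d → ℝ))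
    (hB : ∀ i ∈ S, IsSegmentIn d (B i))
    (hpair : ∀ i ∈ S, ∀ j ∈ S, (B i ∩ B j).Nonempty) : ∃ x, ∀ i ∈ S, x ∈ B i := by
  rcases S.eq_empty_or_nonempty with rfl | hS
  · exact ⟨fun _ => 0, by simp⟩
  · have h' : ∀ i : S, ∃ lo hi : Fin d → ℝ, (∀ m, lo m ≤ hi m) ∧
        B i = {x | ∀ m, x m ∈ Set.Icc (lo m) (hi m)} := by
      intro i
      obtain ⟨lo, hi, h1, _, h3⟩ := hB i i.2
      exact ⟨lo, hi, h1, h3⟩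
    choose lo hi hlh hset using h'
    have hSa : S.attach.Nonempty := Finset.attach_nonempty_iff.2 hS
    refine ⟨fun m => S.attach.sup' hSa (fun i => lo i m), fun i hi' => ?_⟩
    rw [hset ⟨i, hi'⟩]
    intro m
    simp only [Set.mem_Icc]
    constructor
    · exact Finset.le_sup' (fun j => lo j m) (Finset.mem_attach _ ⟨i, hi'⟩)
    · apply Finset.sup'_le
      intro j _
      obtain ⟨y, hy1, hy2⟩ := hpair j j.2 i hi'
      have hyj : y ∈ {x : Fin d → ℝ | ∀ m, x m ∈ Set.Icc (lo j m) (hi j m)} := hset j ▸ hy1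
      have hyi : y ∈ {x : Fin d → ℝ | ∀ m, x m ∈ Set.Icc (lo ⟨i, hi'⟩ m) (hi ⟨i, hi'⟩ m)} :=
        hset ⟨i, hi'⟩ ▸ hy2
      exact le_trans (hyj m).1 (hyi m).2

private lemma parallel_structure {d : ℕ} (hd : 1 ≤ d) {s1 s2 t u : Set (Fin d → ℝ)}
    (hs1 : IsSegmentIn d s1) (hs2 : IsSegmentIn d s2)
    (ht : IsSegmentIn d t) (hu : IsSegmentIn d u)
    (h12 : s1 ∩ s2 = ∅) (ht1 : (t ∩ s1).Nonempty) (ht2 : (t ∩ s2).Nonempty)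
    (hu1 : (u ∩ s1).Nonempty) (hu2 : (u ∩ s2).Nonempty) (htu : t ∩ u = ∅) :
    ∃ p q : Fin d → ℝ, t ∩ s1 = {p} ∧ t ∩ s2 = {q} ∧
      (∀ v, IsSegmentIn d v → (v ∩ s1).Nonempty → (v ∩ s2).Nonempty →
        (v ∩ t).Nonempty → p ∈ v ∧ q ∈ v) ∧
      (∀ b, IsSegmentIn d b → b ∩ s1 = ∅ → (b ∩ s2).Nonempty → q ∉ b → b ∩ t = ∅) := by
  obtain ⟨x1, hx1t, hx1s1⟩ := ht1
  obtain ⟨y1, hy1t, hy1s2⟩ := ht2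
  obtain ⟨x2, hx2u, hx2s1⟩ := hu1
  obtain ⟨y2, hy2u, hy2s2⟩ := hu2
  have hd12 : ∀ z, z ∈ s1 → z ∈ s2 → False := fun z h1 h2 =>
    Set.eq_empty_iff_forall_notMem.1 h12 z ⟨h1, h2⟩
  have hdtu : ∀ z, z ∈ t → z ∈ u → False := fun z h1 h2 =>
    Set.eq_empty_iff_forall_notMem.1 htu z ⟨h1, h2⟩
  obtain ⟨-, k1, hk1, hE1⟩ := seg_struct hd hs1
  obtain ⟨-, k2, hk2, hE2⟩ := seg_struct hd hs2
  obtain ⟨-, k, hk, hEt⟩ := seg_struct hd ht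
  obtain ⟨-, m, hm, hEu⟩ := seg_struct hd hu
  have hx1y1 : x1 k ≠ y1 k := by
    intro h
    apply hd12 x1 hx1s1
    have hxy : x1 = y1 := funext fun i => by
      rcases eq_or_ne i k with rfl | hik
      · exact h
      · exact hk x1 hx1t y1 hy1t i hik
    rw [hxy]; exact hy1s2
  have hx2y2 : x2 m ≠ y2 m := by
    intro h
    apply hd12 x2 hx2s1
    have hxy : x2 = y2 := funext fun i => by
      rcases eq_or_ne i m with rfl | hik
      · exact h
      · exact hm x2 hx2u y2 hy2u i hik
    rw [hxy]; exact hy2s2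
  have hx1x2 : x1 k1 ≠ x2 k1 := by
    intro h
    apply hdtu x1 hx1t
    have hxy : x1 = x2 := funext fun i => by
      rcases eq_or_ne i k1 with rfl | hik
      · exact h
      · exact hk1 x1 hx1s1 x2 hx2s1 i hik
    rw [hxy]; exact hx2u
  by_cases e1 : k = k1
  · subst e1
    by_cases e2 : k = k2
    · subst e2
      -- collinear case
      exfalso
      have em : m = k := by
        by_contra hmk
        apply hx2y2
        calc x2 m = x1 m := hk1 x2 hx2s1 x1 hx1s1 m hmk
          _ = y1 m := hk x1 hx1t y1 hy1t m hmk
          _ = y2 m := hk2 y1 hy1s2 y2 hy2s2 m hmk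
      subst em
      have a12 : ∀ i, i ≠ m → x1 i = y1 i := fun i hik => hk x1 hx1t y1 hy1t i hik
      have a13 : ∀ i, i ≠ m → x1 i = x2 i := fun i hik => hk1 x1 hx1s1 x2 hx2s1 i hik
      set a := x1 m with ha
      set b := y1 m with hb
      set a2 := x2 m with ha2
      set b2 := y2 m with hb2
      have hfs1 : ∀ r : ℝ, min a a2 ≤ r → r ≤ max a a2 → Function.update x1 m r ∈ s1 :=
        fun r h1 h2 => hE1 x1 hx1s1 x2 hx2s1 r h1 h2
      have hfs2 : ∀ r : ℝ, min b b2 ≤ r → r ≤ max b b2 → Function.update x1 m r ∈ s2 := by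
        intro r h1 h2
        have heq : Function.update x1 m r = Function.update y1 m r := by
          funext i
          rcases eq_or_ne i m with rfl | hik
          · simp
          · simp [Function.update_of_ne hik, a12 i hik]
        rw [heq]
        exact hE2 y1 hy1s2 y2 hy2s2 r h1 h2
      have hft : ∀ r : ℝ, min a b ≤ r → r ≤ max a b → Function.update x1 m r ∈ t :=
        fun r h1 h2 => hEt x1 hx1t y1 hy1t r h1 h2
      have hfu : ∀ r : ℝ, min a2 b2 ≤ r → r ≤ max a2 b2 → Function.update x1 m r ∈ u := by
        intro r h1 h2
        have heq : Function.update x1 m r = Function.update x2 m r := by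
          funext i
          rcases eq_or_ne i m with rfl | hik
          · simp
          · simp [Function.update_of_ne hik, a13 i hik]
        rw [heq]
        exact hEu x2 hx2u y2 hy2u r h1 h2
      have l1 : min a b ≤ a := min_le_left _ _
      have l1' : min a b ≤ b := min_le_right _ _
      have l2 : min a2 b2 ≤ a2 := min_le_left _ _
      have l2' : min a2 b2 ≤ b2 := min_le_right _ _
      have l3 : a ≤ max a b := le_max_left _ _
      have l4 : b ≤ max a b := le_max_right _ _
      have l5 : a2 ≤ max a2 b2 := le_max_left _ _
      have l6 : b2 ≤ max a2 b2 := le_max_right _ _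
      have l7 : a ≤ max a a2 := le_max_left _ _
      have l8 : a2 ≤ max a a2 := le_max_right _ _
      have l9 : b ≤ max b b2 := le_max_left _ _
      have l10 : b2 ≤ max b b2 := le_max_right _ _
      have l11 : min a a2 ≤ a := min_le_left _ _
      have l12 : min a a2 ≤ a2 := min_le_right _ _
      have l13 : min b b2 ≤ b := min_le_left _ _
      have l14 : min b b2 ≤ b2 := min_le_right _ _
      have horder : max a a2 < min b b2 ∨ max b b2 < min a a2 := by
        by_contra hconj
        push_neg at hconj
        obtain ⟨hA, hB⟩ := hconj
        exact hd12 (Function.update x1 m (max (min a a2) (min b b2)))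
          (hfs1 _ (le_max_left _ _) (max_le (min_le_max) hA))
          (hfs2 _ (le_max_right _ _) (max_le hB (min_le_max)))
      rcases horder with h | h
      · have h3 : max a a2 < b := lt_of_lt_of_le h l13
        have h4 : max a a2 < b2 := lt_of_lt_of_le h l14
        exact hdtu _ (hft (max a a2) (by linarith) (by linarith))
          (hfu (max a a2) (by linarith) (by linarith))
      · have h3 : max b b2 < a := lt_of_lt_of_le h l11
        have h4 : max b b2 < a2 := lt_of_lt_of_le h l12
        exact hdtu _ (hft (max b b2) (by linarith) (by linarith))
          (hfu (max b b2) (by linarith) (by linarith))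
    · -- k = k1, k ≠ k2
      exfalso
      by_cases em2 : k2 = m
      · -- x2 = y1 ∈ t ∩ u
        have hkm : k ≠ m := fun h => e2 (h.trans em2.symm)
        have hxy : x2 = y1 := by
          funext i
          by_cases hik : i = k
          · subst hik
            calc x2 i = y2 i := hm x2 hx2u y2 hy2u i hkm
              _ = y1 i := hk2 y2 hy2s2 y1 hy1s2 i e2
          · calc x2 i = x1 i := hk1 x2 hx2s1 x1 hx1s1 i hik
              _ = y1 i := hk x1 hx1t y1 hy1t i hik
        exact hdtu y1 hy1t (hxy ▸ hx2u)
      · -- y1 = y2 ∈ t ∩ u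
        have hxy : y1 = y2 := by
          funext i
          by_cases hik2 : i = k2
          · subst hik2
            calc y1 i = x1 i := hk y1 hy1t x1 hx1t i (fun h => e2 h.symm)
              _ = x2 i := hk1 x1 hx1s1 x2 hx2s1 i (fun h => e2 h.symm)
              _ = y2 i := hm x2 hx2u y2 hy2u i em2
          · exact hk2 y1 hy1s2 y2 hy2s2 i hik2
        exact hdtu y1 hy1t (hxy ▸ hy2u)
  · by_cases e2 : k = k2
    · subst e2
      exfalso
      by_cases em1 : k1 = m
      · -- x1 = y2 ∈ t ∩ u
        have hxy : x1 = y2 := by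
          funext i
          by_cases hik1 : i = k1
          · subst hik1
            calc x1 i = y1 i := hk x1 hx1t y1 hy1t i (fun h => e1 h.symm)
              _ = y2 i := hk2 y1 hy1s2 y2 hy2s2 i (fun h => e1 h.symm)
          · calc x1 i = x2 i := hk1 x1 hx1s1 x2 hx2s1 i hik1
              _ = y2 i := hm x2 hx2u y2 hy2u i (fun h => hik1 (h.trans em1.symm))
        exact hdtu x1 hx1t (hxy ▸ hy2u)
      · -- x1 k1 = x2 k1 contra
        apply hx1x2
        calc x1 k1 = y1 k1 := hk x1 hx1t y1 hy1t k1 (fun h => e1 h.symm)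
          _ = y2 k1 := hk2 y1 hy1s2 y2 hy2s2 k1 (fun h => e1 h.symm)
          _ = x2 k1 := (hm x2 hx2u y2 hy2u k1 em1).symm
    · -- main parallel case: k ≠ k1, k ≠ k2
      have em : k = m := by
        by_contra hmk
        apply hx1y1
        calc x1 k = x2 k := hk1 x1 hx1s1 x2 hx2s1 k e1
          _ = y2 k := hm x2 hx2u y2 hy2u k hmk
          _ = y1 k := hk2 y2 hy2s2 y1 hy1s2 k e2
      subst em
      have ek12 : k1 = k2 := by
        by_contra h12'
        apply hx1x2
        calc x1 k1 = y1 k1 := hk x1 hx1t y1 hy1t k1 (fun h => e1 h.symm)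
          _ = y2 k1 := hk2 y1 hy1s2 y2 hy2s2 k1 h12'
          _ = x2 k1 := (hm x2 hx2u y2 hy2u k1 (fun h => e1 h.symm)).symm
      subst ek12
      have hkk1 : k ≠ k1 := e1
      have hzx : x1 k1 = y1 k1 := hk x1 hx1t y1 hy1t k1 (fun h => hkk1 h.symm)
      have hs1k : ∀ x ∈ s1, x k = x1 k := fun x hx => hk1 x hx x1 hx1s1 k hkk1
      have hs2k : ∀ y ∈ s2, y k = y1 k := fun y hy => hk2 y hy y1 hy1s2 k hkk1
      have hsing1 : t ∩ s1 = {x1} := by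
        ext ξ
        simp only [Set.mem_inter_iff, Set.mem_singleton_iff]
        constructor
        · rintro ⟨hξt, hξs1⟩
          funext i
          by_cases hik1 : i = k1
          · subst hik1; exact hk ξ hξt x1 hx1t i (fun h => hkk1 h.symm)
          · exact hk1 ξ hξs1 x1 hx1s1 i hik1
        · rintro rfl; exact ⟨hx1t, hx1s1⟩
      have hsing2 : t ∩ s2 = {y1} := by
        ext ξ
        simp only [Set.mem_inter_iff, Set.mem_singleton_iff]
        constructor
        · rintro ⟨hξt, hξs2⟩
          funext i
          by_cases hik1 : i = k1
          · subst hik1; exact hk ξ hξt y1 hy1t i (fun h => hkk1 h.symm)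
          · exact hk2 ξ hξs2 y1 hy1s2 i hik1
        · rintro rfl; exact ⟨hy1t, hy1s2⟩
      refine ⟨x1, y1, hsing1, hsing2, ?_, ?_⟩
      · rintro v hv ⟨pv, hpvv, hpvs1⟩ ⟨qv, hqvv, hqvs2⟩ ⟨r, hrv, hrt⟩
        obtain ⟨-, jv, hjv, -⟩ := seg_struct hd hv
        have hjvk : jv = k := by
          by_contra h
          apply hx1y1
          rw [← hs1k pv hpvs1, ← hs2k qv hqvs2]
          exact hjv pv hpvv qv hqvv k (fun hh => h hh.symm)
        subst hjvk
        have hpv : pv = x1 := by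
          funext i
          by_cases hik1 : i = k1
          · subst hik1
            calc pv i = r i := (hjv r hrv pv hpvv i (fun h => hkk1 h.symm)).symm
              _ = x1 i := hk r hrt x1 hx1t i (fun h => hkk1 h.symm)
          · exact hk1 pv hpvs1 x1 hx1s1 i hik1
        have hqv : qv = y1 := by
          funext i
          by_cases hik1 : i = k1
          · subst hik1
            calc qv i = pv i := hjv qv hqvv pv hpvv i (fun h => hkk1 h.symm)
              _ = x1 i := by rw [hpv]
              _ = y1 i := hzx
          · exact hk2 qv hqvs2 y1 hy1s2 i hik1
        exact ⟨hpv ▸ hpvv, hqv ▸ hqvv⟩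
      · rintro b hb hb1 ⟨yb, hybb, hybs2⟩ hq
        by_contra hbt
        obtain ⟨r, hrb, hrt⟩ := Set.nonempty_iff_ne_empty.2 hbt
        obtain ⟨-, jb, hjb, -⟩ := seg_struct hd hb
        by_cases hc1 : r k = yb k
        · apply hq
          have hr : r = y1 := by
            funext i
            by_cases hik : i = k
            · subst hik; rw [hc1]; exact hs2k yb hybs2
            · calc r i = x1 i := hk r hrt x1 hx1t i hik
                _ = y1 i := hk x1 hx1t y1 hy1t i hik
          exact hr ▸ hrb
        · by_cases hc2 : yb k1 = r k1
          · apply hq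
            have hr : yb = y1 := by
              funext i
              by_cases hik1 : i = k1
              · subst hik1
                calc yb i = r i := hc2
                  _ = x1 i := hk r hrt x1 hx1t i (fun h => hkk1 h.symm)
                  _ = y1 i := hzx
              · exact hk2 yb hybs2 y1 hy1s2 i hik1
            exact hr ▸ hybb
          · have h1 : k = jb := by
              by_contra h
              exact hc1 (hjb r hrb yb hybb k h)
            have h2 : k1 = jb := by
              by_contra h
              exact hc2 (hjb yb hybb r hrb k1 h)
            exact hkk1 (h1.trans h2.symm)

end HellyAux

/-- a finite family of axis-parallel segments in `ℝ^d` (`d ≥ 1`) is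
2-pierceable iff every subfamily of cardinality 5 is 2-pierceable (`h(d,1,2) = 5`). -/
theorem helly_two_piercing_segments {ι : Type*} [Fintype ι] (d : ℕ) (hd : 1 ≤ d)
    (B : ι → Set (Fin d → ℝ)) (hB : ∀ i, IsSegmentIn d (B i)) :
    Pierceable B 2 ↔ ∀ S : Finset ι, S.card ≤ 5 → PierceableOn B S 2 := by
  constructor
  · rintro ⟨P, hPc, hP⟩ S _
    exact ⟨P, hPc, fun i _ => hP i⟩
  · intro h5
    classical
    by_cases hpair : ∀ i j : ι, (B i ∩ B j).Nonempty
    · obtain ⟨x, hx⟩ := seg_helly Finset.univ B (fun i _ => hB i)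
        (fun i _ j _ => hpair i j)
      exact ⟨{x}, by simp, fun i => ⟨x, by simp, hx i (Finset.mem_univ i)⟩⟩
    · push_neg at hpair
      obtain ⟨i1, i2, h12'⟩ := hpair
      have h12 : B i1 ∩ B i2 = ∅ := h12'
      set s1 := B i1 with hs1def
      set s2 := B i2 with hs2def
      have hcard5 : ∀ a b c e f : ι, ({a, b, c, e, f} : Finset ι).card ≤ 5 := by
        intro a b c e f
        have h1 := Finset.card_insert_le a ({b, c, e, f} : Finset ι)
        have h2 := Finset.card_insert_le b ({c, e, f} : Finset ι)
        have h3 := Finset.card_insert_le c ({e, f} : Finset ι)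
        have h4 := Finset.card_insert_le e ({f} : Finset ι)
        have h5' : ({f} : Finset ι).card = 1 := Finset.card_singleton f
        omega
      have key2 : ∀ (ia ib : ι), B ia ∩ B ib = ∅ → ∀ S : Finset ι, S.card ≤ 5 → ia ∈ S → ib ∈ S →
          ∃ p q, p ∈ B ia ∧ q ∈ B ib ∧ ∀ i ∈ S, p ∈ B i ∨ q ∈ B i := by
        intro ia ib hdisj S hS hia hib
        obtain ⟨P, hPc, hhit⟩ := h5 S hS
        obtain ⟨p, hpP, hpa⟩ := hhit ia hia
        obtain ⟨q, hqP, hqb⟩ := hhit ib hib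
        have hpq : p ≠ q := fun h =>
          Set.eq_empty_iff_forall_notMem.1 hdisj p ⟨hpa, h ▸ hqb⟩
        refine ⟨p, q, hpa, hqb, fun i hi => ?_⟩
        obtain ⟨r, hrP, hri⟩ := hhit i hi
        rcases mem_pair_of_card_le_two hPc hpP hqP hpq r hrP with rfl | rfl
        · exact Or.inl hri
        · exact Or.inr hri
      have hmeets : ∀ i, (B i ∩ s1).Nonempty ∨ (B i ∩ s2).Nonempty := by
        intro i
        obtain ⟨p, q, hp, hq, hall⟩ := key2 i1 i2 h12 {i1, i2, i, i, i}
          (hcard5 _ _ _ _ _) (by simp) (by simp)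
        rcases hall i (by simp) with h | h
        · exact Or.inl ⟨p, h, hp⟩
        · exact Or.inr ⟨q, h, hq⟩
      by_cases hC : ∃ it iu, (B it ∩ s1).Nonempty ∧ (B it ∩ s2).Nonempty ∧
          (B iu ∩ s1).Nonempty ∧ (B iu ∩ s2).Nonempty ∧ B it ∩ B iu = ∅
      · -- branch (b): two disjoint "connectors"
        obtain ⟨it, iu, ht1, ht2, hu1, hu2, htu⟩ := hC
        obtain ⟨ps, qs, htS1, htS2, hvt, hmisst⟩ :=
          parallel_structure hd (hB i1) (hB i2) (hB it) (hB iu) h12 ht1 ht2 hu1 hu2 htu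
        have htu' : B iu ∩ B it = ∅ := by rw [Set.inter_comm]; exact htu
        obtain ⟨ps', qs', huS1, huS2, hvu, hmissu⟩ :=
          parallel_structure hd (hB i1) (hB i2) (hB iu) (hB it) h12 hu1 hu2 ht1 ht2 htu'
        have h21 : s2 ∩ s1 = ∅ := by rw [Set.inter_comm]; exact h12
        obtain ⟨qs2, ps2, htS2', htS1', _, hmisst'⟩ :=
          parallel_structure hd (hB i2) (hB i1) (hB it) (hB iu) h21 ht2 ht1 hu2 hu1 htu
        obtain ⟨qs2', ps2', huS2', huS1', _, hmissu'⟩ :=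
          parallel_structure hd (hB i2) (hB i1) (hB iu) (hB it) h21 hu2 hu1 ht2 ht1 htu'
        -- identify points
        have hps2 : ps2 = ps := by
          have : ({ps2} : Set (Fin d → ℝ)) = {ps} := htS1' ▸ htS1
          simpa using this
        have hqs2 : qs2 = qs := by
          have : ({qs2} : Set (Fin d → ℝ)) = {qs} := htS2' ▸ htS2
          simpa using this
        have hps2' : ps2' = ps' := by
          have : ({ps2'} : Set (Fin d → ℝ)) = {ps'} := huS1' ▸ huS1
          simpa using this
        have hqs2' : qs2' = qs' := by
          have : ({qs2'} : Set (Fin d → ℝ)) = {qs'} := huS2' ▸ huS2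
          simpa using this
        rw [hps2] at hmisst'
        rw [hps2'] at hmissu'
        -- basic memberships
        have hpst : ps ∈ B it ∧ ps ∈ s1 := by
          have : ps ∈ B it ∩ s1 := htS1 ▸ rfl
          exact this
        have hqst : qs ∈ B it ∧ qs ∈ s2 := by
          have : qs ∈ B it ∩ s2 := htS2 ▸ rfl
          exact this
        have hpsu : ps' ∈ B iu ∧ ps' ∈ s1 := by
          have : ps' ∈ B iu ∩ s1 := huS1 ▸ rfl
          exact this
        have hqsu : qs' ∈ B iu ∧ qs' ∈ s2 := by
          have : qs' ∈ B iu ∩ s2 := huS2 ▸ rfl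
          exact this
        -- Z/W dichotomies
        have hZ : (∀ a, B a ∩ s2 = ∅ → ps ∈ B a) ∨ (∀ b, B b ∩ s1 = ∅ → qs ∈ B b) := by
          by_contra hcon
          push_neg at hcon
          obtain ⟨⟨a, ha, hpa⟩, ⟨b, hb, hqb⟩⟩ := hcon
          obtain ⟨p, q, hp, hq, hall⟩ := key2 i1 i2 h12 {i1, i2, a, b, it}
            (hcard5 _ _ _ _ _) (by simp) (by simp)
          have hpBa : p ∈ B a := by
            rcases hall a (by simp) with h | h
            · exact h
            · exact absurd (Set.eq_empty_iff_forall_notMem.1 ha q ⟨h, hq⟩) (fun x => x)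
          have hqBb : q ∈ B b := by
            rcases hall b (by simp) with h | h
            · exact absurd (Set.eq_empty_iff_forall_notMem.1 hb p ⟨h, hp⟩) (fun x => x)
            · exact h
          rcases hall it (by simp) with h | h
          · have : p ∈ ({ps} : Set (Fin d → ℝ)) := htS1 ▸ (⟨h, hp⟩ : p ∈ B it ∩ s1)
            exact hpa (this ▸ hpBa)
          · have : q ∈ ({qs} : Set (Fin d → ℝ)) := htS2 ▸ (⟨h, hq⟩ : q ∈ B it ∩ s2)
            exact hqb (this ▸ hqBb)
        have hW : (∀ a, B a ∩ s2 = ∅ → ps' ∈ B a) ∨ (∀ b, B b ∩ s1 = ∅ → qs' ∈ B b) := by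
          by_contra hcon
          push_neg at hcon
          obtain ⟨⟨a, ha, hpa⟩, ⟨b, hb, hqb⟩⟩ := hcon
          obtain ⟨p, q, hp, hq, hall⟩ := key2 i1 i2 h12 {i1, i2, a, b, iu}
            (hcard5 _ _ _ _ _) (by simp) (by simp)
          have hpBa : p ∈ B a := by
            rcases hall a (by simp) with h | h
            · exact h
            · exact absurd (Set.eq_empty_iff_forall_notMem.1 ha q ⟨h, hq⟩) (fun x => x)
          have hqBb : q ∈ B b := by
            rcases hall b (by simp) with h | h
            · exact absurd (Set.eq_empty_iff_forall_notMem.1 hb p ⟨h, hp⟩) (fun x => x)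
            · exact h
          rcases hall iu (by simp) with h | h
          · have : p ∈ ({ps'} : Set (Fin d → ℝ)) := huS1 ▸ (⟨h, hp⟩ : p ∈ B iu ∩ s1)
            exact hpa (this ▸ hpBa)
          · have : q ∈ ({qs'} : Set (Fin d → ℝ)) := huS2 ▸ (⟨h, hq⟩ : q ∈ B iu ∩ s2)
            exact hqb (this ▸ hqBb)
        -- coverage of doubly-meeting members
        have hCov : ∀ i, (B i ∩ s1).Nonempty → (B i ∩ s2).Nonempty →
            (ps ∈ B i ∧ qs ∈ B i) ∨ (ps' ∈ B i ∧ qs' ∈ B i) := by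
          intro i hi1 hi2
          by_cases hit' : (B i ∩ B it).Nonempty
          · exact Or.inl (hvt (B i) (hB i) hi1 hi2 hit')
          · by_cases hiu' : (B i ∩ B iu).Nonempty
            · exact Or.inr (hvu (B i) (hB i) hi1 hi2 hiu')
            · exfalso
              have hdt : B i ∩ B it = ∅ := Set.not_nonempty_iff_eq_empty.1 hit'
              have hdu : B i ∩ B iu = ∅ := Set.not_nonempty_iff_eq_empty.1 hiu'
              obtain ⟨p, q, hp, hq, hall⟩ := key2 it iu htu {it, iu, i, i, i}
                (hcard5 _ _ _ _ _) (by simp) (by simp)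
              rcases hall i (by simp) with h | h
              · exact Set.eq_empty_iff_forall_notMem.1 hdt p ⟨h, hp⟩
              · exact Set.eq_empty_iff_forall_notMem.1 hdu q ⟨h, hq⟩
        -- final assembly helper
        have hassem : ∀ p' q' : Fin d → ℝ,
            (∀ a, B a ∩ s2 = ∅ → p' ∈ B a) → (∀ b, B b ∩ s1 = ∅ → q' ∈ B b) →
            (∀ i, (B i ∩ s1).Nonempty → (B i ∩ s2).Nonempty → p' ∈ B i ∨ q' ∈ B i) →
            Pierceable B 2 := by
          intro p' q' hp' hq' hc
          refine ⟨{p', q'}, ?_, fun i => ?_⟩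
          · exact le_trans (Finset.card_insert_le _ _) (by simp)
          · by_cases h2' : (B i ∩ s2).Nonempty
            · by_cases h1' : (B i ∩ s1).Nonempty
              · rcases hc i h1' h2' with h | h
                · exact ⟨p', by simp, h⟩
                · exact ⟨q', by simp, h⟩
              · exact ⟨q', by simp, hq' i (Set.not_nonempty_iff_eq_empty.1 h1')⟩
            · exact ⟨p', by simp, hp' i (Set.not_nonempty_iff_eq_empty.1 h2')⟩
        -- contradiction paths
        have hcontra1 : (∃ b1, B b1 ∩ s1 = ∅ ∧ qs ∉ B b1) →
            (∃ b2, B b2 ∩ s1 = ∅ ∧ qs' ∉ B b2) → False := by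
          rintro ⟨b1, hb1A, hq1⟩ ⟨b2, hb2A, hq2⟩
          have hb1s2 : (B b1 ∩ s2).Nonempty := by
            rcases hmeets b1 with h | h
            · rw [hb1A] at h; exact absurd h (by simp [Set.not_nonempty_empty])
            · exact h
          have hb2s2 : (B b2 ∩ s2).Nonempty := by
            rcases hmeets b2 with h | h
            · rw [hb2A] at h; exact absurd h (by simp [Set.not_nonempty_empty])
            · exact h
          have hb1t : B b1 ∩ B it = ∅ := hmisst (B b1) (hB b1) hb1A hb1s2 hq1
          have hb2u : B b2 ∩ B iu = ∅ := hmissu (B b2) (hB b2) hb2A hb2s2 hq2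
          obtain ⟨p, q, hp, hq, hall⟩ := key2 it iu htu {i1, it, iu, b1, b2}
            (hcard5 _ _ _ _ _) (by simp) (by simp)
          have hqb1 : q ∈ B b1 := by
            rcases hall b1 (by simp) with h | h
            · exact absurd (Set.eq_empty_iff_forall_notMem.1 hb1t p ⟨h, hp⟩) (fun x => x)
            · exact h
          have hpb2 : p ∈ B b2 := by
            rcases hall b2 (by simp) with h | h
            · exact h
            · exact absurd (Set.eq_empty_iff_forall_notMem.1 hb2u q ⟨h, hq⟩) (fun x => x)
          rcases hall i1 (by simp) with h | h
          · exact Set.eq_empty_iff_forall_notMem.1 hb2A p ⟨hpb2, h⟩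
          · exact Set.eq_empty_iff_forall_notMem.1 hb1A q ⟨hqb1, h⟩
        have hcontra2 : (∃ a1, B a1 ∩ s2 = ∅ ∧ ps ∉ B a1) →
            (∃ a2, B a2 ∩ s2 = ∅ ∧ ps' ∉ B a2) → False := by
          rintro ⟨a1, ha1A, hp1⟩ ⟨a2, ha2A, hp2⟩
          have ha1s1 : (B a1 ∩ s1).Nonempty := by
            rcases hmeets a1 with h | h
            · exact h
            · rw [ha1A] at h; exact absurd h (by simp [Set.not_nonempty_empty])
          have ha2s1 : (B a2 ∩ s1).Nonempty := by
            rcases hmeets a2 with h | h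
            · exact h
            · rw [ha2A] at h; exact absurd h (by simp [Set.not_nonempty_empty])
          have ha1t : B a1 ∩ B it = ∅ := hmisst' (B a1) (hB a1) ha1A ha1s1 hp1
          have ha2u : B a2 ∩ B iu = ∅ := hmissu' (B a2) (hB a2) ha2A ha2s1 hp2
          obtain ⟨p, q, hp, hq, hall⟩ := key2 it iu htu {i2, it, iu, a1, a2}
            (hcard5 _ _ _ _ _) (by simp) (by simp)
          have hqa1 : q ∈ B a1 := by
            rcases hall a1 (by simp) with h | h
            · exact absurd (Set.eq_empty_iff_forall_notMem.1 ha1t p ⟨h, hp⟩) (fun x => x)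
            · exact h
          have hpa2 : p ∈ B a2 := by
            rcases hall a2 (by simp) with h | h
            · exact h
            · exact absurd (Set.eq_empty_iff_forall_notMem.1 ha2u q ⟨h, hq⟩) (fun x => x)
          rcases hall i2 (by simp) with h | h
          · exact Set.eq_empty_iff_forall_notMem.1 ha2A p ⟨hpa2, h⟩
          · exact Set.eq_empty_iff_forall_notMem.1 ha1A q ⟨hqa1, h⟩
        -- case analysis on dichotomies
        rcases hZ with hZ1 | hZ2
        · by_cases hW2 : ∀ b, B b ∩ s1 = ∅ → qs' ∈ B b
          · refine hassem ps qs' hZ1 hW2 (fun i hi1 hi2 => ?_)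
            rcases hCov i hi1 hi2 with h | h
            · exact Or.inl h.1
            · exact Or.inr h.2
          · by_cases hZ2 : ∀ b, B b ∩ s1 = ∅ → qs ∈ B b
            · rcases hW with hW1 | hW2'
              · refine hassem ps' qs hW1 hZ2 (fun i hi1 hi2 => ?_)
                rcases hCov i hi1 hi2 with h | h
                · exact Or.inr h.2
                · exact Or.inl h.1
              · exact absurd hW2' hW2
            · push_neg at hW2 hZ2
              obtain ⟨b1, hb1, hq1⟩ := hZ2
              obtain ⟨b2, hb2, hq2⟩ := hW2
              exact absurd (hcontra1 ⟨b1, hb1, hq1⟩ ⟨b2, hb2, hq2⟩) (fun x => x)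
        · rcases hW with hW1 | hW2
          · refine hassem ps' qs hW1 hZ2 (fun i hi1 hi2 => ?_)
            rcases hCov i hi1 hi2 with h | h
            · exact Or.inr h.2
            · exact Or.inl h.1
          · by_cases hZ1 : ∀ a, B a ∩ s2 = ∅ → ps ∈ B a
            · refine hassem ps qs' hZ1 hW2 (fun i hi1 hi2 => ?_)
              rcases hCov i hi1 hi2 with h | h
              · exact Or.inl h.1
              · exact Or.inr h.2
            · by_cases hW1 : ∀ a, B a ∩ s2 = ∅ → ps' ∈ B a
              · -- have W1 and Z2: assemble with ps', qs
                refine hassem ps' qs hW1 hZ2 (fun i hi1 hi2 => ?_)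
                rcases hCov i hi1 hi2 with h | h
                · exact Or.inr h.2
                · exact Or.inl h.1
              · push_neg at hZ1 hW1
                exact absurd (hcontra2 hZ1 hW1) (fun x => x)
      · -- branch (a): all doubly-meeting members pairwise intersect
        push_neg at hC
        have hC' : ∀ i j, (B i ∩ s1).Nonempty → (B i ∩ s2).Nonempty →
            (B j ∩ s1).Nonempty → (B j ∩ s2).Nonempty → (B i ∩ B j).Nonempty := by
          intro i j h1 h2 h3 h4
          exact hC i j h1 h2 h3 h4
        have hAA : ∀ a a', B a ∩ s2 = ∅ → B a' ∩ s2 = ∅ → (B a ∩ B a' ∩ s1).Nonempty := by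
          intro a a' ha ha'
          obtain ⟨p, q, hp, hq, hall⟩ := key2 i1 i2 h12 {i1, i2, a, a', a'}
            (hcard5 _ _ _ _ _) (by simp) (by simp)
          have h1 : p ∈ B a := by
            rcases hall a (by simp) with h | h
            · exact h
            · exact absurd (Set.eq_empty_iff_forall_notMem.1 ha q ⟨h, hq⟩) (fun x => x)
          have h2 : p ∈ B a' := by
            rcases hall a' (by simp) with h | h
            · exact h
            · exact absurd (Set.eq_empty_iff_forall_notMem.1 ha' q ⟨h, hq⟩) (fun x => x)
          exact ⟨p, ⟨h1, h2⟩, hp⟩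
        have hBB : ∀ b b', B b ∩ s1 = ∅ → B b' ∩ s1 = ∅ → (B b ∩ B b' ∩ s2).Nonempty := by
          intro b b' hb hb'
          obtain ⟨p, q, hp, hq, hall⟩ := key2 i1 i2 h12 {i1, i2, b, b', b'}
            (hcard5 _ _ _ _ _) (by simp) (by simp)
          have h1 : q ∈ B b := by
            rcases hall b (by simp) with h | h
            · exact absurd (Set.eq_empty_iff_forall_notMem.1 hb p ⟨h, hp⟩) (fun x => x)
            · exact h
          have h2 : q ∈ B b' := by
            rcases hall b' (by simp) with h | h
            · exact absurd (Set.eq_empty_iff_forall_notMem.1 hb' p ⟨h, hp⟩) (fun x => x)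
            · exact h
          exact ⟨q, ⟨h1, h2⟩, hq⟩
        have hdich : ∀ i, (B i ∩ s1).Nonempty → (B i ∩ s2).Nonempty →
            (∀ a, B a ∩ s2 = ∅ → (B i ∩ B a ∩ s1).Nonempty) ∨
            (∀ b, B b ∩ s1 = ∅ → (B i ∩ B b ∩ s2).Nonempty) := by
          intro i hi1 hi2
          by_contra hcon
          push_neg at hcon
          obtain ⟨⟨a, ha, hia⟩, ⟨b, hb, hib⟩⟩ := hcon
          have hiae : B i ∩ B a ∩ s1 = ∅ := hia
          have hibe : B i ∩ B b ∩ s2 = ∅ := hib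
          obtain ⟨p, q, hp, hq, hall⟩ := key2 i1 i2 h12 {i1, i2, a, b, i}
            (hcard5 _ _ _ _ _) (by simp) (by simp)
          have hpa : p ∈ B a := by
            rcases hall a (by simp) with h | h
            · exact h
            · exact absurd (Set.eq_empty_iff_forall_notMem.1 ha q ⟨h, hq⟩) (fun x => x)
          have hqb : q ∈ B b := by
            rcases hall b (by simp) with h | h
            · exact absurd (Set.eq_empty_iff_forall_notMem.1 hb p ⟨h, hp⟩) (fun x => x)
            · exact h
          rcases hall i (by simp) with h | h
          · exact Set.eq_empty_iff_forall_notMem.1 hiae p ⟨⟨h, hpa⟩, hp⟩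
          · exact Set.eq_empty_iff_forall_notMem.1 hibe q ⟨⟨h, hqb⟩, hq⟩
        set SP := Finset.univ.filter (fun i => B i ∩ s2 = ∅ ∨
          ((B i ∩ s1).Nonempty ∧ (B i ∩ s2).Nonempty ∧
            ∀ a, B a ∩ s2 = ∅ → (B i ∩ B a ∩ s1).Nonempty)) with hSP
        set SQ := Finset.univ.filter (fun i => B i ∩ s1 = ∅ ∨
          ((B i ∩ s1).Nonempty ∧ (B i ∩ s2).Nonempty ∧
            ∀ b, B b ∩ s1 = ∅ → (B i ∩ B b ∩ s2).Nonempty)) with hSQ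
        have hSPpair : ∀ i ∈ SP, ∀ j ∈ SP, (B i ∩ B j).Nonempty := by
          intro i hi j hj
          rw [hSP, Finset.mem_filter] at hi hj
          rcases hi.2 with hiA | ⟨hi1, hi2, hiP⟩
          · rcases hj.2 with hjA | ⟨hj1, hj2, hjP⟩
            · obtain ⟨p, hp, _⟩ := hAA i j hiA hjA
              exact ⟨p, hp⟩
            · obtain ⟨p, hp, _⟩ := hjP i hiA
              exact ⟨p, hp.2, hp.1⟩
          · rcases hj.2 with hjA | ⟨hj1, hj2, hjP⟩
            · obtain ⟨p, hp, _⟩ := hiP j hjA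
              exact ⟨p, hp⟩
            · exact hC' i j hi1 hi2 hj1 hj2
        have hSQpair : ∀ i ∈ SQ, ∀ j ∈ SQ, (B i ∩ B j).Nonempty := by
          intro i hi j hj
          rw [hSQ, Finset.mem_filter] at hi hj
          rcases hi.2 with hiA | ⟨hi1, hi2, hiP⟩
          · rcases hj.2 with hjA | ⟨hj1, hj2, hjP⟩
            · obtain ⟨p, hp, _⟩ := hBB i j hiA hjA
              exact ⟨p, hp⟩
            · obtain ⟨p, hp, _⟩ := hjP i hiA
              exact ⟨p, hp.2, hp.1⟩
          · rcases hj.2 with hjA | ⟨hj1, hj2, hjP⟩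
            · obtain ⟨p, hp, _⟩ := hiP j hjA
              exact ⟨p, hp⟩
            · exact hC' i j hi1 hi2 hj1 hj2
        obtain ⟨p, hp⟩ := seg_helly SP B (fun i _ => hB i) hSPpair
        obtain ⟨q, hq⟩ := seg_helly SQ B (fun i _ => hB i) hSQpair
        refine ⟨{p, q}, le_trans (Finset.card_insert_le _ _) (by simp), fun i => ?_⟩
        by_cases h2' : (B i ∩ s2).Nonempty
        · by_cases h1' : (B i ∩ s1).Nonempty
          · rcases hdich i h1' h2' with h | h
            · refine ⟨p, by simp, hp i ?_⟩
              rw [hSP, Finset.mem_filter]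
              exact ⟨Finset.mem_univ i, Or.inr ⟨h1', h2', h⟩⟩
            · refine ⟨q, by simp, hq i ?_⟩
              rw [hSQ, Finset.mem_filter]
              exact ⟨Finset.mem_univ i, Or.inr ⟨h1', h2', h⟩⟩
          · refine ⟨q, by simp, hq i ?_⟩
            rw [hSQ, Finset.mem_filter]
            exact ⟨Finset.mem_univ i, Or.inl (Set.not_nonempty_iff_eq_empty.1 h1')⟩
        · refine ⟨p, by simp, hp i ?_⟩
          rw [hSP, Finset.mem_filter]
          exact ⟨Finset.mem_univ i, Or.inl (Set.not_nonempty_iff_eq_empty.1 h2')⟩
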